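/- Let K(t,s) be a continuous n×n complex matrix kernel on [a,b]×[a,b], and for ξ ∈ (a,b] let Γ_ξ(t,s) be the resolvent kernel, i.e. a continuous matrix function satisfying both Γ_ξ(t,s) − ∫_a^ξ K(t,u)Γ_ξ(u,s) du = K(t,s) and Γ_ξ(t,s) − ∫_a^ξ Γ_ξ(t,u)K(u,s) du = K(t,s) for a ≤ t,s ≤ ξ. If Γ_ξ(t,s) is continuously differentiable in ξ, then ∂Γ_ξ(t,s)/∂ξ = Γ_ξ(t,ξ)·Γ_ξ(ξ,s). -/

import Mathlib

open Matrix intervalIntegral Set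

open MeasureTheory Filter

attribute [local instance] Matrix.normedAddCommGroup Matrix.normedSpace

noncomputable instance matrixENormedAddCommMonoidAux (n : ℕ) :
    ENormedAddCommMonoid (Matrix (Fin n) (Fin n) ℂ) :=
  NormedAddCommGroup.toENormedAddCommMonoid

section Aux

variable {n : ℕ}

noncomputable def mulLeftCLM (c : Matrix (Fin n) (Fin n) ℂ) :
    Matrix (Fin n) (Fin n) ℂ →L[ℝ] Matrix (Fin n) (Fin n) ℂ :=
  { toLinearMap := (LinearMap.mulLeft ℂ c).restrictScalars ℝ
    cont := continuous_const.mul continuous_id }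

noncomputable def mulRightCLM (c : Matrix (Fin n) (Fin n) ℂ) :
    Matrix (Fin n) (Fin n) ℂ →L[ℝ] Matrix (Fin n) (Fin n) ℂ :=
  { toLinearMap := (LinearMap.mulRight ℂ c).restrictScalars ℝ
    cont := continuous_id.mul continuous_const }

lemma integral_const_mul' (f : ℝ → Matrix (Fin n) (Fin n) ℂ) (c : Matrix (Fin n) (Fin n) ℂ)
    (p q : ℝ) (hf : IntervalIntegrable f volume p q) :
    (∫ u in p..q, c * f u) = c * ∫ u in p..q, f u :=
  Eq.symm (by exact ((mulLeftCLM c).intervalIntegral_comp_comm hf).symm)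

lemma integral_mul_const' (f : ℝ → Matrix (Fin n) (Fin n) ℂ) (c : Matrix (Fin n) (Fin n) ℂ)
    (p q : ℝ) (hf : IntervalIntegrable f volume p q) :
    (∫ u in p..q, f u * c) = (∫ u in p..q, f u) * c :=
  Eq.symm (by exact ((mulRightCLM c).intervalIntegral_comp_comm hf).symm)

lemma interval_fubini (g : ℝ → ℝ → Matrix (Fin n) (Fin n) ℂ)
    (hg : Continuous fun z : ℝ × ℝ => g z.1 z.2) {p q r w : ℝ} (hpq : p ≤ q) (hrw : r ≤ w) :
    (∫ x in p..q, ∫ y in r..w, g x y) = ∫ y in r..w, ∫ x in p..q, g x y := by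
  rw [intervalIntegral.integral_of_le hpq, intervalIntegral.integral_of_le hrw]
  simp_rw [intervalIntegral.integral_of_le hrw, intervalIntegral.integral_of_le hpq]
  have hint : Integrable (Function.uncurry g)
      ((volume.restrict (Ioc p q)).prod (volume.restrict (Ioc r w))) := by
    rw [Measure.prod_restrict]
    exact (hg.continuousOn.integrableOn_compact (isCompact_Icc.prod isCompact_Icc)).mono_set
      (Set.prod_mono Ioc_subset_Icc_self Ioc_subset_Icc_self)
  exact MeasureTheory.integral_integral_swap hint

lemma cont_param_integral (g : ℝ → ℝ → Matrix (Fin n) (Fin n) ℂ)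
    (hg : Continuous fun z : ℝ × ℝ => g z.1 z.2) (p q : ℝ) :
    Continuous fun x => ∫ u in p..q, g x u := by
  have := intervalIntegral.continuous_parametric_intervalIntegral_of_continuous'
      (μ := volume) (f := g) ?_ p q
  · exact this
  · exact hg

end Aux

/-- the resolvent kernel Γ_ξ(t,s) of a continuous matrix kernel K,
assumed C¹ in ξ, satisfies ∂Γ_ξ(t,s)/∂ξ = Γ_ξ(t,ξ)·Γ_ξ(ξ,s). -/
theorem resolvent_deriv (n : ℕ) (a b : ℝ) (hab : a < b)
    (K : ℝ → ℝ → Matrix (Fin n) (Fin n) ℂ)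
    (hK : Continuous fun p : ℝ × ℝ => K p.1 p.2)
    (Γ : ℝ → ℝ → ℝ → Matrix (Fin n) (Fin n) ℂ)  -- Γ ξ t s
    (hΓcont : Continuous fun p : ℝ × ℝ × ℝ => Γ p.1 p.2.1 p.2.2)
    (hres1 : ∀ ξ ∈ Ioc a b, ∀ t ∈ Icc a ξ, ∀ s ∈ Icc a ξ,
      Γ ξ t s - ∫ u in a..ξ, K t u * Γ ξ u s = K t s)
    (hres2 : ∀ ξ ∈ Ioc a b, ∀ t ∈ Icc a ξ, ∀ s ∈ Icc a ξ,
      Γ ξ t s - ∫ u in a..ξ, Γ ξ t u * K u s = K t s)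
    (D : ℝ → ℝ → ℝ → Matrix (Fin n) (Fin n) ℂ)  -- ∂Γ/∂ξ
    (hDcont : Continuous fun p : ℝ × ℝ × ℝ => D p.1 p.2.1 p.2.2)
    (hderiv : ∀ ξ ∈ Ioc a b, ∀ t ∈ Icc a ξ, ∀ s ∈ Icc a ξ,
      HasDerivAt (fun η => Γ η t s) (D ξ t s) ξ) :
    ∀ ξ ∈ Ioc a b, ∀ t ∈ Icc a ξ, ∀ s ∈ Icc a ξ,
      D ξ t s = Γ ξ t ξ * Γ ξ ξ s := by
  intro ξ hξ
  obtain ⟨haξ, hξb⟩ := hξ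
  have hIic : UniqueDiffWithinAt ℝ (Iic ξ) ξ := uniqueDiffOn_Iic ξ ξ self_mem_Iic
  -- Step A : integro-differential equation satisfied by D ξ · s for t, s < ξ
  have main : ∀ s ∈ Ico a ξ, ∀ t ∈ Ico a ξ,
      D ξ t s = K t ξ * Γ ξ ξ s + ∫ u in a..ξ, K t u * D ξ u s := by
    intro s hs t ht
    set m : ℝ := max (max t s) a with hm_def
    have hma : a ≤ m := le_max_right _ _
    have htm : t ≤ m := le_max_of_le_left (le_max_left _ _)
    have hsm : s ≤ m := le_max_of_le_left (le_max_right _ _)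
    have hmξ : m < ξ := by
      simp only [hm_def, max_lt_iff]
      exact ⟨⟨ht.2, hs.2⟩, haξ⟩
    have hS : Ioc m ξ ∈ nhdsWithin ξ (Iic ξ) := by
      have h1 : Ioi m ∩ Iic ξ = Ioc m ξ := by ext x; simp [and_comm, Ioc]
      rw [← h1]
      exact Filter.inter_mem (mem_nhdsWithin_of_mem_nhds (Ioi_mem_nhds hmξ)) self_mem_nhdsWithin
    have hcKΓξ : Continuous fun u => K t u * Γ ξ u s := by fun_prop
    have hcKD : Continuous fun z : ℝ × ℝ => K t z.2 * D z.1 z.2 s := by fun_prop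
    have hcKDl : ∀ l, Continuous fun u => K t u * D l u s := by intro l; fun_prop
    have hcDl : ∀ u, Continuous fun l => D l u s := by intro u; fun_prop
    have hC0c : Continuous fun l => ∫ u in a..ξ, K t u * D l u s :=
      cont_param_integral _ hcKD a ξ
    -- decomposition of the integral term
    have hdecomp : ∀ η, (∫ u in a..η, K t u * Γ η u s)
        = (∫ u in a..ξ, K t u * Γ ξ u s) + (∫ u in ξ..η, K t u * Γ ξ u s)
          + (∫ u in a..η, (K t u * Γ η u s - K t u * Γ ξ u s)) := by
      intro η
      have hcη : Continuous fun u => K t u * Γ η u s := by fun_prop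
      have e1 : (∫ u in a..η, K t u * Γ η u s)
          = (∫ u in a..η, K t u * Γ ξ u s)
            + (∫ u in a..η, (K t u * Γ η u s - K t u * Γ ξ u s)) := by
        rw [← intervalIntegral.integral_add (hcKΓξ.intervalIntegrable a η)
          ((by fun_prop : Continuous fun u => K t u * Γ η u s - K t u * Γ ξ u s).intervalIntegrable a η)]
        congr 1
        funext u
        abel
      rw [e1, intervalIntegral.integral_add_adjacent_intervals (hcKΓξ.intervalIntegrable a ξ)
        (hcKΓξ.intervalIntegrable ξ η)]
    -- derivative of the A1 part
    have hA1d : HasDerivAt (fun η => ∫ u in ξ..η, K t u * Γ ξ u s) (K t ξ * Γ ξ ξ s) ξ :=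
      (hcKΓξ.integral_hasStrictDerivAt ξ ξ).hasDerivAt
    -- rewriting of the B part on Ioc m ξ
    have hBψ : ∀ η ∈ Ioc m ξ, (∫ u in a..η, (K t u * Γ η u s - K t u * Γ ξ u s))
        = (∫ l in ξ..η, ∫ u in a..ξ, K t u * D l u s)
          - ∫ l in ξ..η, ∫ u in η..ξ, K t u * D l u s := by
      rintro η ⟨hmη, hηξ⟩
      have haη : a ≤ η := le_trans hma hmη.le
      have hintg : EqOn (fun u => K t u * Γ η u s - K t u * Γ ξ u s)
          (fun u => ∫ l in ξ..η, K t u * D l u s) (uIcc a η) := by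
        intro u hu
        rw [uIcc_of_le haη] at hu
        have hFTC : (∫ l in ξ..η, D l u s) = Γ η u s - Γ ξ u s := by
          apply intervalIntegral.integral_eq_sub_of_hasDerivAt
          · intro l hl
            rw [uIcc_of_ge hηξ] at hl
            exact hderiv l ⟨lt_of_le_of_lt hma (lt_of_lt_of_le hmη hl.1),
                le_trans hl.2 hξb⟩ u ⟨hu.1, le_trans hu.2 hl.1⟩ s
                ⟨hs.1, le_trans hsm (le_trans hmη.le hl.1)⟩
          · exact (hcDl u).intervalIntegrable _ _
        show K t u * Γ η u s - K t u * Γ ξ u s = _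
        calc K t u * Γ η u s - K t u * Γ ξ u s
            = K t u * (Γ η u s - Γ ξ u s) := (mul_sub _ _ _).symm
          _ = K t u * ∫ l in ξ..η, D l u s := by rw [hFTC]
          _ = ∫ l in ξ..η, K t u * D l u s :=
              (integral_const_mul' _ _ _ _ ((hcDl u).intervalIntegrable _ _)).symm
      have hB1 : (∫ u in a..η, (K t u * Γ η u s - K t u * Γ ξ u s))
          = ∫ u in a..η, ∫ l in ξ..η, K t u * D l u s :=
        intervalIntegral.integral_congr hintg
      have e2 : (∫ u in a..η, (K t u * Γ η u s - K t u * Γ ξ u s))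
          = - ∫ u in a..η, ∫ l in η..ξ, K t u * D l u s := by
        rw [hB1, ← intervalIntegral.integral_neg]
        apply intervalIntegral.integral_congr
        intro u _
        exact intervalIntegral.integral_symm η ξ
      rw [e2, interval_fubini _ (by fun_prop) haη hηξ]
      rw [← intervalIntegral.integral_sub
        ((cont_param_integral _ hcKD a ξ).intervalIntegrable ξ η)
        ((cont_param_integral _ hcKD η ξ).intervalIntegrable ξ η)]
      rw [intervalIntegral.integral_symm η ξ, neg_inj]
      apply intervalIntegral.integral_congr
      intro l _
      have hadj : (∫ u in a..η, K t u * D l u s) + (∫ u in η..ξ, K t u * D l u s)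
          = ∫ u in a..ξ, K t u * D l u s :=
        intervalIntegral.integral_add_adjacent_intervals
          ((hcKDl l).intervalIntegrable a η) ((hcKDl l).intervalIntegrable η ξ)
      exact eq_sub_of_add_eq hadj
    -- the error term is o(η - ξ)
    have herr : HasDerivWithinAt (fun η => ∫ l in ξ..η, ∫ u in η..ξ, K t u * D l u s)
        0 (Iic ξ) ξ := by
      obtain ⟨M, hM⟩ := (isCompact_Icc.prod isCompact_Icc).exists_bound_of_continuousOn
        (hcKD.continuousOn (s := Icc a b ×ˢ Icc a b))
      have hM0 : (0:ℝ) ≤ max M 0 := le_max_right _ _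
      refine hasDerivWithinAt_iff_isLittleO.2 ?_
      simp only [intervalIntegral.integral_same, sub_zero, smul_zero]
      rw [Asymptotics.isLittleO_iff]
      intro c hc
      have hden : (0:ℝ) < max M 0 + 1 := by linarith
      have hev1 : ∀ᶠ η in nhdsWithin ξ (Iic ξ), a < η :=
        (eventually_gt_nhds haξ).filter_mono nhdsWithin_le_nhds
      have hev2 : ∀ᶠ η in nhdsWithin ξ (Iic ξ), dist η ξ < c / (max M 0 + 1) :=
        mem_nhdsWithin_of_mem_nhds (Metric.ball_mem_nhds ξ (div_pos hc hden))
      have hev3 : ∀ᶠ η in nhdsWithin ξ (Iic ξ), η ≤ ξ :=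
        eventually_mem_nhdsWithin.mono fun x h => h
      filter_upwards [hev1, hev2, hev3] with η hηa hηd hηξ'
      have habs : |ξ - η| ≤ c / (max M 0 + 1) := by
        rw [abs_sub_comm]
        rw [Real.dist_eq] at hηd
        exact hηd.le
      have hbound : ‖∫ l in ξ..η, ∫ u in η..ξ, K t u * D l u s‖
          ≤ max M 0 * |ξ - η| * |η - ξ| := by
        apply intervalIntegral.norm_integral_le_of_norm_le_const
        intro l hl
        rw [Set.uIoc_of_ge hηξ'] at hl
        have hl' : l ∈ Icc a b :=
          ⟨le_of_lt (lt_of_lt_of_le hηa hl.1.le), le_trans hl.2 hξb⟩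
        apply intervalIntegral.norm_integral_le_of_norm_le_const
        intro u hu
        rw [Set.uIoc_of_le hηξ'] at hu
        have hu' : u ∈ Icc a b :=
          ⟨le_of_lt (lt_of_lt_of_le hηa hu.1.le), le_trans hu.2 hξb⟩
        exact le_trans (hM (l, u) ⟨hl', hu'⟩) (le_max_left _ _)
      refine le_trans hbound ?_
      rw [Real.norm_eq_abs]
      have h2 : (max M 0 + 1) * |ξ - η| ≤ c := by
        rw [mul_comm]
        exact (le_div_iff₀ hden).mp habs
      have h1 : max M 0 * |ξ - η| ≤ c := by nlinarith [abs_nonneg (ξ - η)]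
      exact mul_le_mul_of_nonneg_right h1 (abs_nonneg _)
    -- derivative of the B part
    have hBd : HasDerivWithinAt
        (fun η => ∫ u in a..η, (K t u * Γ η u s - K t u * Γ ξ u s))
        (∫ u in a..ξ, K t u * D ξ u s) (Iic ξ) ξ := by
      have hψd : HasDerivWithinAt
          (fun η => (∫ l in ξ..η, ∫ u in a..ξ, K t u * D l u s)
            - ∫ l in ξ..η, ∫ u in η..ξ, K t u * D l u s)
          ((∫ u in a..ξ, K t u * D ξ u s) - 0) (Iic ξ) ξ :=
        HasDerivWithinAt.sub
          ((hC0c.integral_hasStrictDerivAt ξ ξ).hasDerivAt.hasDerivWithinAt) herr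
      rw [sub_zero] at hψd
      apply hψd.congr_of_eventuallyEq
      · exact Filter.eventuallyEq_of_mem hS fun η hη => hBψ η hη
      · simp
    -- Γ η t s agrees with the decomposed expression near ξ
    have hfφ : ∀ η ∈ Ioc m ξ, Γ η t s
        = K t s + ((∫ u in a..ξ, K t u * Γ ξ u s)
          + (∫ u in ξ..η, K t u * Γ ξ u s)
          + ∫ u in a..η, (K t u * Γ η u s - K t u * Γ ξ u s)) := by
      rintro η ⟨hmη, hηξ⟩
      have hr := hres1 η ⟨lt_of_le_of_lt hma hmη, le_trans hηξ hξb⟩ t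
        ⟨ht.1, le_trans htm hmη.le⟩ s ⟨hs.1, le_trans hsm hmη.le⟩
      rw [← hdecomp η]
      exact eq_add_of_sub_eq hr
    have hφd : HasDerivWithinAt (fun η => K t s + ((∫ u in a..ξ, K t u * Γ ξ u s)
          + (∫ u in ξ..η, K t u * Γ ξ u s)
          + ∫ u in a..η, (K t u * Γ η u s - K t u * Γ ξ u s)))
        (K t ξ * Γ ξ ξ s + ∫ u in a..ξ, K t u * D ξ u s) (Iic ξ) ξ := by
      have h0 := ((hA1d.hasDerivWithinAt.add hBd).const_add
        (∫ u in a..ξ, K t u * Γ ξ u s)).const_add (K t s)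
      simp only [Pi.add_apply, ← add_assoc] at h0 ⊢
      exact h0
    have h2 : HasDerivWithinAt (fun η => Γ η t s)
        (K t ξ * Γ ξ ξ s + ∫ u in a..ξ, K t u * D ξ u s) (Iic ξ) ξ :=
      hφd.congr_of_eventuallyEq (Filter.eventuallyEq_of_mem hS fun η hη => hfφ η hη)
        (hfφ ξ ⟨hmξ, le_refl ξ⟩)
    have h1 : HasDerivWithinAt (fun η => Γ η t s) (D ξ t s) (Iic ξ) ξ :=
      (hderiv ξ ⟨haξ, hξb⟩ t ⟨ht.1, ht.2.le⟩ s ⟨hs.1, hs.2.le⟩).hasDerivWithinAt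
    rw [← h1.derivWithin hIic, ← h2.derivWithin hIic]
  -- Step B : the candidate Γ ξ t ξ * Γ ξ ξ s satisfies the same equation
  have cand : ∀ s ∈ Icc a ξ, ∀ t ∈ Icc a ξ,
      Γ ξ t ξ * Γ ξ ξ s = K t ξ * Γ ξ ξ s + ∫ u in a..ξ, K t u * (Γ ξ u ξ * Γ ξ ξ s) := by
    intro s _ t ht
    have h := hres1 ξ ⟨haξ, hξb⟩ t ht ξ ⟨haξ.le, le_refl ξ⟩
    have h' : Γ ξ t ξ = K t ξ + ∫ u in a..ξ, K t u * Γ ξ u ξ := eq_add_of_sub_eq h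
    have hcKΓ : Continuous fun u => K t u * Γ ξ u ξ := by fun_prop
    calc Γ ξ t ξ * Γ ξ ξ s
        = (K t ξ + ∫ u in a..ξ, K t u * Γ ξ u ξ) * Γ ξ ξ s := by rw [← h']
      _ = K t ξ * Γ ξ ξ s + (∫ u in a..ξ, K t u * Γ ξ u ξ) * Γ ξ ξ s := add_mul _ _ _
      _ = K t ξ * Γ ξ ξ s + ∫ u in a..ξ, (K t u * Γ ξ u ξ) * Γ ξ ξ s := by
          rw [integral_mul_const' _ _ _ _ (hcKΓ.intervalIntegrable a ξ)]
      _ = K t ξ * Γ ξ ξ s + ∫ u in a..ξ, K t u * (Γ ξ u ξ * Γ ξ ξ s) := by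
          congr 1
          apply intervalIntegral.integral_congr
          intro u _
          exact mul_assoc _ _ _
  -- Step C : uniqueness of the solution of the Fredholm equation
  have keyA : ∀ s ∈ Ico a ξ, ∀ t ∈ Icc a ξ, D ξ t s = Γ ξ t ξ * Γ ξ ξ s := by
    intro s hs
    have hHc : Continuous fun u => D ξ u s - Γ ξ u ξ * Γ ξ ξ s := by fun_prop
    have hKH : ∀ t, Continuous fun u => K t u * (D ξ u s - Γ ξ u ξ * Γ ξ ξ s) := by
      intro t; fun_prop
    have hH0 : ∀ t ∈ Ico a ξ, D ξ t s - Γ ξ t ξ * Γ ξ ξ s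
        = ∫ u in a..ξ, K t u * (D ξ u s - Γ ξ u ξ * Γ ξ ξ s) := by
      intro t ht
      have h1 := main s hs t ht
      have h2 := cand s ⟨hs.1, hs.2.le⟩ t ⟨ht.1, ht.2.le⟩
      have h3 : D ξ t s - Γ ξ t ξ * Γ ξ ξ s = (∫ u in a..ξ, K t u * D ξ u s)
          - ∫ u in a..ξ, K t u * (Γ ξ u ξ * Γ ξ ξ s) := by
        rw [h1, h2]
        abel
      rw [h3, ← intervalIntegral.integral_sub
        ((by fun_prop : Continuous fun u => K t u * D ξ u s).intervalIntegrable a ξ)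
        ((by fun_prop : Continuous fun u => K t u * (Γ ξ u ξ * Γ ξ ξ s)).intervalIntegrable a ξ)]
      apply intervalIntegral.integral_congr
      intro u _
      exact (mul_sub _ _ _).symm
    have hH1 : ∀ t ∈ Icc a ξ, D ξ t s - Γ ξ t ξ * Γ ξ ξ s
        = ∫ u in a..ξ, K t u * (D ξ u s - Γ ξ u ξ * Γ ξ ξ s) := by
      have hcont2 : Continuous fun t => ∫ u in a..ξ, K t u * (D ξ u s - Γ ξ u ξ * Γ ξ ξ s) :=
        cont_param_integral (fun t u => K t u * (D ξ u s - Γ ξ u ξ * Γ ξ ξ s))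
          (by fun_prop) a ξ
      have hcl := Set.EqOn.closure (fun t ht => hH0 t ht) hHc hcont2
      rw [closure_Ico haξ.ne] at hcl
      exact fun t ht => hcl ht
    intro t ht
    have key : (∫ u in a..ξ, K t u * (D ξ u s - Γ ξ u ξ * Γ ξ ξ s)) = 0 := by
      have c1 : (∫ v in a..ξ, Γ ξ t v * (D ξ v s - Γ ξ v ξ * Γ ξ ξ s))
          = ∫ v in a..ξ, Γ ξ t v * ∫ u in a..ξ, K v u * (D ξ u s - Γ ξ u ξ * Γ ξ ξ s) := by
        apply intervalIntegral.integral_congr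
        intro v hv
        rw [uIcc_of_le haξ.le] at hv
        show Γ ξ t v * (D ξ v s - Γ ξ v ξ * Γ ξ ξ s)
            = Γ ξ t v * ∫ u in a..ξ, K v u * (D ξ u s - Γ ξ u ξ * Γ ξ ξ s)
        rw [← hH1 v hv]
      have c2 : (∫ v in a..ξ, Γ ξ t v * ∫ u in a..ξ, K v u * (D ξ u s - Γ ξ u ξ * Γ ξ ξ s))
          = ∫ v in a..ξ, ∫ u in a..ξ, Γ ξ t v * (K v u * (D ξ u s - Γ ξ u ξ * Γ ξ ξ s)) := by
        apply intervalIntegral.integral_congr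
        intro v _
        exact (integral_const_mul' _ _ _ _ ((hKH v).intervalIntegrable a ξ)).symm
      have c3 : (∫ v in a..ξ, ∫ u in a..ξ, Γ ξ t v * (K v u * (D ξ u s - Γ ξ u ξ * Γ ξ ξ s)))
          = ∫ u in a..ξ, ∫ v in a..ξ, Γ ξ t v * (K v u * (D ξ u s - Γ ξ u ξ * Γ ξ ξ s)) :=
        interval_fubini _ (by fun_prop) haξ.le haξ.le
      have c4 : (∫ u in a..ξ, ∫ v in a..ξ, Γ ξ t v * (K v u * (D ξ u s - Γ ξ u ξ * Γ ξ ξ s)))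
          = ∫ u in a..ξ, (Γ ξ t u - K t u) * (D ξ u s - Γ ξ u ξ * Γ ξ ξ s) := by
        apply intervalIntegral.integral_congr
        intro u hu
        rw [uIcc_of_le haξ.le] at hu
        show (∫ v in a..ξ, Γ ξ t v * (K v u * (D ξ u s - Γ ξ u ξ * Γ ξ ξ s)))
            = (Γ ξ t u - K t u) * (D ξ u s - Γ ξ u ξ * Γ ξ ξ s)
        have e : (∫ v in a..ξ, Γ ξ t v * (K v u * (D ξ u s - Γ ξ u ξ * Γ ξ ξ s)))
            = (∫ v in a..ξ, Γ ξ t v * K v u) * (D ξ u s - Γ ξ u ξ * Γ ξ ξ s) := by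
          rw [← integral_mul_const' _ _ _ _
            ((by fun_prop : Continuous fun v => Γ ξ t v * K v u).intervalIntegrable a ξ)]
          apply intervalIntegral.integral_congr
          intro v _
          exact (mul_assoc _ _ _).symm
        rw [e]
        have h5 := hres2 ξ ⟨haξ, hξb⟩ t ht u hu
        have h6 : (∫ v in a..ξ, Γ ξ t v * K v u) = Γ ξ t u - K t u := by
          rw [← h5]; abel
        rw [h6]
      have c5 : (∫ u in a..ξ, (Γ ξ t u - K t u) * (D ξ u s - Γ ξ u ξ * Γ ξ ξ s))
          = (∫ u in a..ξ, Γ ξ t u * (D ξ u s - Γ ξ u ξ * Γ ξ ξ s))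
            - ∫ u in a..ξ, K t u * (D ξ u s - Γ ξ u ξ * Γ ξ ξ s) := by
        rw [← intervalIntegral.integral_sub
          ((by fun_prop : Continuous fun u => Γ ξ t u * (D ξ u s - Γ ξ u ξ * Γ ξ ξ s)).intervalIntegrable a ξ)
          ((hKH t).intervalIntegrable a ξ)]
        apply intervalIntegral.integral_congr
        intro u _
        exact sub_mul _ _ _
      have hfin := c1.trans (c2.trans (c3.trans (c4.trans c5)))
      exact sub_eq_self.mp hfin.symm
    have hfin2 := hH1 t ht
    rw [key] at hfin2
    exact sub_eq_zero.mp hfin2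
  -- Step D : extend to s = ξ by continuity
  intro t ht s hs
  have hF1 : Continuous fun s => D ξ t s := by fun_prop
  have hF2 : Continuous fun s => Γ ξ t ξ * Γ ξ ξ s := by fun_prop
  have heq : EqOn (fun s => D ξ t s) (fun s => Γ ξ t ξ * Γ ξ ξ s) (Ico a ξ) :=
    fun s hs => keyA s hs t ht
  have hcl := Set.EqOn.closure heq hF1 hF2
  rw [closure_Ico haξ.ne] at hcl
  exact hcl hs
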